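/- Let f : ℝ² → ℝ be a C¹ function and let γ be a connected component of f⁻¹(0) that is homeomorphic to the circle S¹. Then there exist two distinct points p ≠ q on γ at which the partial derivative ∂f/∂y vanishes: ∂f/∂y(p) = ∂f/∂y(q) = 0. (Such points arise at the maximum and minimum of the first coordinate function x restricted to γ: there, either the level set is singular or it has a vertical tangent, and in both cases f_y = 0.) -/

import Mathlib

noncomputable section
open Metric Set Bornology

/-- The Euclidean plane. -/
abbrev Plane := EuclideanSpace ℝ (Fin 2)

/-- The Euclidean Laplacian `Δf = ∂²f/∂x² + ∂²f/∂y²` of `f : ℝ² → ℝ`. -/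
def lap (f : Plane → ℝ) (x : Plane) : ℝ :=
  ∑ i : Fin 2,
    fderiv ℝ (fun y => fderiv ℝ f y (EuclideanSpace.single i 1)) x (EuclideanSpace.single i 1)

/-- A nodal oval of `u` : a connected component of the zero set `u⁻¹(0)` that is
homeomorphic to the circle `S¹`. -/
def IsNodalOval (u : Plane → ℝ) (γ : Set Plane) : Prop :=
  (∃ x ∈ u ⁻¹' {0}, γ = connectedComponentIn (u ⁻¹' {0}) x) ∧ Nonempty (γ ≃ₜ Circle)

/-- `D` is a bounded connected component of the complement of `γ` (the "inside" `D(γ)`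
of a nodal oval, by the Jordan curve theorem). -/
def IsInnerDisk (γ D : Set Plane) : Prop :=
  IsBounded D ∧ ∃ x ∈ γᶜ, D = connectedComponentIn γᶜ x

/-- A double nest: an ordered pair `(γin, γout)` of distinct nodal ovals of `u` with
`closure (D(γin)) ⊆ D(γout)`. -/
def IsDoubleNest (u : Plane → ℝ) (γin γout : Set Plane) : Prop :=
  IsNodalOval u γin ∧ IsNodalOval u γout ∧ γin ≠ γout ∧
    ∃ Din Dout, IsInnerDisk γin Din ∧ IsInnerDisk γout Dout ∧ closure Din ⊆ Dout

/-- The set of double nests of `u`, whose cardinality is `N_dn(u)`. -/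
def doubleNests (u : Plane → ℝ) : Set (Set Plane × Set Plane) :=
  {p | IsDoubleNest u p.1 p.2}

/- ### Auxiliary lemmas -/

lemma connCircle : ConnectedSpace Circle := by
  have hs : Function.Surjective Circle.exp := fun z => ⟨Complex.arg z, Circle.exp_arg z⟩
  exact hs.connectedSpace Circle.exp.continuous

lemma expPiNe : Circle.exp Real.pi ≠ 1 := by
  intro h
  rw [Circle.exp_eq_one] at h
  obtain ⟨n, hn⟩ := h
  have hz : (1 - 2*(n:ℝ)) * Real.pi = 0 := by nlinarith [hn]
  have h1 : (1:ℝ) - 2*n = 0 := by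
    rcases mul_eq_zero.1 hz with h|h
    · exact h
    · exact absurd h Real.pi_ne_zero
  have hc : ((2*n : ℤ):ℝ) = ((1:ℤ):ℝ) := by push_cast; linarith
  have := Int.cast_injective (α := ℝ) hc
  omega

lemma isConnected_circle_compl (w : Circle) : IsConnected ({w}ᶜ : Set Circle) := by
  have h2π : (0:ℝ) < 2 * Real.pi := by positivity
  set θ := Complex.arg w with hθ
  have hw : Circle.exp θ = w := Circle.exp_arg w
  have himg : ⇑Circle.exp '' Set.Ioo θ (θ + 2 * Real.pi) = {w}ᶜ := by
    apply Set.eq_of_subset_of_subset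
    · rintro _ ⟨t, ht, rfl⟩
      simp only [Set.mem_compl_iff, Set.mem_singleton_iff]
      intro h
      rw [← hw, Circle.exp_eq_exp] at h
      obtain ⟨m, hm⟩ := h
      have h1 : (0:ℝ) < m * (2 * Real.pi) := by linarith [ht.1, ht.2]
      have h2 : m * (2 * Real.pi) < 2 * Real.pi := by linarith [ht.1, ht.2]
      have hm0 : (0:ℤ) < m := by
        exact_mod_cast (mul_lt_mul_iff_of_pos_right h2π).1 (by linarith : (0:ℝ) * (2*Real.pi) < m * (2*Real.pi))
      have hm1 : (m:ℤ) < 1 := by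
        exact_mod_cast (mul_lt_mul_iff_of_pos_right h2π).1 (by linarith : (m:ℝ) * (2*Real.pi) < 1 * (2*Real.pi))
      omega
    · intro u hu
      have hne : u ≠ w := hu
      set t := toIocMod h2π θ (Complex.arg u) with htdef
      have htmem : t ∈ Set.Ioc θ (θ + 2 * Real.pi) := toIocMod_mem_Ioc h2π θ _
      have hexp : Circle.exp t = u := by
        have h1 : Circle.exp t = Circle.exp (Complex.arg u) := by
          rw [Circle.exp_eq_exp]
          exact ⟨-(toIocDiv h2π θ (Complex.arg u)), by
            rw [htdef, toIocMod, zsmul_eq_mul]; push_cast; ring⟩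
        rw [h1, Circle.exp_arg]
      have hne2 : t ≠ θ + 2 * Real.pi := by
        intro h
        exact hne (by rw [← hexp, h, Circle.exp_add_two_pi, hw])
      exact ⟨t, ⟨htmem.1, lt_of_le_of_ne htmem.2 hne2⟩, hexp⟩
  rw [← himg]
  exact (isConnected_Ioo (by linarith)).image _ Circle.exp.continuous.continuousOn

lemma punctured_connected {γ : Set Plane} (e : ↥γ ≃ₜ Circle) {z : Plane} (hz : z ∈ γ) :
    IsConnected (γ \ {z}) := by
  have h := isConnected_circle_compl (e ⟨z, hz⟩)
  have h2 : IsConnected ((fun u : Circle => (e.symm u : Plane)) '' ({e ⟨z, hz⟩}ᶜ)) :=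
    h.image _ (continuous_subtype_val.comp e.symm.continuous).continuousOn
  convert h2 using 1
  ext x
  constructor
  · rintro ⟨hxγ, hxz⟩
    simp only [Set.mem_singleton_iff] at hxz
    refine ⟨e ⟨x, hxγ⟩, ?_, by simp⟩
    simp only [Set.mem_compl_iff, Set.mem_singleton_iff]
    intro h'
    exact hxz (congrArg Subtype.val (e.injective h'))
  · rintro ⟨u, hu, rfl⟩
    simp only [Set.mem_compl_iff, Set.mem_singleton_iff] at hu
    refine ⟨(e.symm u).2, ?_⟩
    simp only [Set.mem_singleton_iff]
    intro h'
    apply hu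
    have h3 : e.symm u = ⟨z, hz⟩ := Subtype.ext h'
    rw [← h3, Homeomorph.apply_symm_apply]

lemma plane_decomp (z : Plane) :
    z = z 0 • EuclideanSpace.single (0:Fin 2) (1:ℝ) + z 1 • EuclideanSpace.single 1 1 := by
  ext i; fin_cases i <;> simp [EuclideanSpace.single_apply]

lemma coord_ext (z w : Plane) (h0 : z 0 = w 0) (h1 : z 1 = w 1) : z = w := by
  rw [plane_decomp z, plane_decomp w, h0, h1]

lemma cross (f : Plane → ℝ) (hf : ContDiff ℝ 1 f) (p : Plane) (hp : f p = 0)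
    (hy : fderiv ℝ f p (EuclideanSpace.single 1 1) ≠ 0) :
    (∃ z ∈ connectedComponentIn (f ⁻¹' {0}) p, z 0 < p 0) ∧
    (∃ z ∈ connectedComponentIn (f ⁻¹' {0}) p, p 0 < z 0) := by
  set g : Plane → ℝ × ℝ := fun z => (z 0, f z) with hg
  set A : Plane →L[ℝ] ℝ × ℝ := (EuclideanSpace.proj (0:Fin 2)).prod (fderiv ℝ f p) with hAdef
  have hA : HasStrictFDerivAt g A p :=
    ((EuclideanSpace.proj (𝕜 := ℝ) (0:Fin 2)).hasStrictFDerivAt).prodMk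
      ((hf.contDiffAt).hasStrictFDerivAt one_ne_zero)
  have hinj : Function.Injective A := by
    rw [injective_iff_map_eq_zero]
    intro z hz
    have h0 : z 0 = 0 := congrArg Prod.fst hz
    have h1 : fderiv ℝ f p z = 0 := congrArg Prod.snd hz
    have hdz := plane_decomp z
    rw [hdz, map_add, map_smul, map_smul, h0, zero_smul, zero_add] at h1
    have hz1 : z 1 = 0 := by
      by_contra hne
      exact hy (by simpa [smul_eq_mul, hne] using h1)
    rw [hdz, h0, hz1, zero_smul, zero_smul, add_zero]
  have hd : Module.finrank ℝ Plane = Module.finrank ℝ (ℝ × ℝ) := by simp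
  let E : Plane ≃L[ℝ] ℝ × ℝ :=
    (LinearMap.linearEquivOfInjective A.toLinearMap hinj hd).toContinuousLinearEquiv
  have hAE : (E : Plane →L[ℝ] ℝ × ℝ) = A := by
    ext z <;> rfl
  have hA' : HasStrictFDerivAt g (E : Plane →L[ℝ] ℝ × ℝ) p := hAE ▸ hA
  set G := HasStrictFDerivAt.toOpenPartialHomeomorph g hA' with hGdef
  have hGcoe : (G : Plane → ℝ × ℝ) = g := HasStrictFDerivAt.toOpenPartialHomeomorph_coe hA'
  have hpsrc : p ∈ G.source := HasStrictFDerivAt.mem_toOpenPartialHomeomorph_source hA'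
  have hptgt : g p ∈ G.target := HasStrictFDerivAt.image_mem_toOpenPartialHomeomorph_target hA'
  obtain ⟨ε, hε, hball⟩ := Metric.isOpen_iff.1 G.open_target (g p) hptgt
  have hgp : g p = (p 0, 0) := by rw [hg]; simp [hp]
  set c : ℝ → Plane := fun t => G.symm (t, 0) with hcdef
  have hmem : ∀ t ∈ Icc (p 0 - ε/2) (p 0 + ε/2), ((t, (0:ℝ)) : ℝ × ℝ) ∈ G.target := by
    intro t ht
    apply hball
    rw [hgp, Metric.mem_ball, Prod.dist_eq]
    have h1 : dist t (p 0) ≤ ε/2 := by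
      rw [Real.dist_eq]; exact abs_sub_le_iff.2 ⟨by linarith [ht.2], by linarith [ht.1]⟩
    have h2 : dist (0:ℝ) 0 ≤ ε/2 := by simp; linarith
    exact lt_of_le_of_lt (max_le h1 h2) (by linarith)
  have hgc : ∀ t ∈ Icc (p 0 - ε/2) (p 0 + ε/2), g (c t) = (t, 0) := by
    intro t ht
    have := G.right_inv (hmem t ht)
    rwa [hGcoe] at this
  have hc0 : ∀ t ∈ Icc (p 0 - ε/2) (p 0 + ε/2), (c t) 0 = t := by
    intro t ht
    exact congrArg Prod.fst (hgc t ht)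
  have hfc : ∀ t ∈ Icc (p 0 - ε/2) (p 0 + ε/2), f (c t) = 0 := by
    intro t ht
    exact congrArg Prod.snd (hgc t ht)
  have hcp : c (p 0) = p := by
    rw [hcdef]
    show G.symm (p 0, 0) = p
    rw [show ((p 0, (0:ℝ)) : ℝ × ℝ) = g p from hgp.symm, ← hGcoe]
    exact G.left_inv hpsrc
  set S : Set Plane := c '' Icc (p 0 - ε/2) (p 0 + ε/2) with hSdef
  have hScont : ContinuousOn c (Icc (p 0 - ε/2) (p 0 + ε/2)) := by
    apply G.continuousOn_symm.comp
    · exact (continuous_id.prodMk continuous_const).continuousOn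
    · exact hmem
  have hSconn : IsPreconnected S := (isPreconnected_Icc).image c hScont
  have hSsub : S ⊆ f ⁻¹' {0} := by
    rintro _ ⟨t, ht, rfl⟩
    exact hfc t ht
  have hpS : p ∈ S := ⟨p 0, by constructor <;> linarith, hcp⟩
  have hScomp : S ⊆ connectedComponentIn (f ⁻¹' {0}) p :=
    hSconn.subset_connectedComponentIn hpS hSsub
  constructor
  · refine ⟨c (p 0 - ε/2), hScomp ⟨_, ?_, rfl⟩, ?_⟩
    · constructor <;> linarith
    · rw [hc0 _ (by constructor <;> linarith)]; linarith
  · refine ⟨c (p 0 + ε/2), hScomp ⟨_, ?_, rfl⟩, ?_⟩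
    · constructor <;> linarith
    · rw [hc0 _ (by constructor <;> linarith)]; linarith

/-- If `f : ℝ² → ℝ` is `C¹` and `γ` is a connected component of `f⁻¹(0)`
homeomorphic to the circle, then there are two distinct points of `γ` at which the partial
derivative `∂f/∂y` vanishes. -/
theorem stmt_8 (f : Plane → ℝ) (hf : ContDiff ℝ 1 f)
    (γ : Set Plane) (hγ : IsNodalOval f γ) :
    ∃ p q : Plane, p ∈ γ ∧ q ∈ γ ∧ p ≠ q ∧
      fderiv ℝ f p (EuclideanSpace.single 1 1) = 0 ∧
      fderiv ℝ f q (EuclideanSpace.single 1 1) = 0 := by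
  obtain ⟨⟨x₀, hx₀, hγeq⟩, ⟨e⟩⟩ := hγ
  have hγsub : γ ⊆ f ⁻¹' {0} := hγeq ▸ connectedComponentIn_subset _ _
  have hne : γ.Nonempty := hγeq ▸ ⟨x₀, mem_connectedComponentIn hx₀⟩
  have hcomp : IsCompact γ := by
    rw [isCompact_iff_compactSpace]; exact e.symm.compactSpace
  have hconnsp : ConnectedSpace ↥γ := by
    have := connCircle
    exact e.symm.surjective.connectedSpace e.symm.continuous
  have hγconn : IsConnected γ := isConnected_iff_connectedSpace.2 hconnsp
  have contx : Continuous fun z : Plane => z 0 := by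
    simpa using (EuclideanSpace.proj (0:Fin 2)).continuous
  have conty : Continuous fun z : Plane => z 1 := by
    simpa using (EuclideanSpace.proj (1:Fin 2)).continuous
  obtain ⟨p, hpγ, hpmax⟩ := hcomp.exists_isMaxOn hne contx.continuousOn
  obtain ⟨q, hqγ, hqmin⟩ := hcomp.exists_isMinOn hne contx.continuousOn
  have hγz : ∀ z ∈ γ, γ = connectedComponentIn (f ⁻¹' {0}) z := by
    intro z hz
    rw [hγeq] at hz ⊢
    exact connectedComponentIn_eq hz
  have hp0 : fderiv ℝ f p (EuclideanSpace.single 1 1) = 0 := by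
    by_contra h
    obtain ⟨z, hzc, hz⟩ := (cross f hf p (hγsub hpγ) h).2
    rw [← hγz p hpγ] at hzc
    exact absurd (hpmax hzc) (not_le.2 hz)
  have hq0 : fderiv ℝ f q (EuclideanSpace.single 1 1) = 0 := by
    by_contra h
    obtain ⟨z, hzc, hz⟩ := (cross f hf q (hγsub hqγ) h).1
    rw [← hγz q hqγ] at hzc
    exact absurd (hqmin hzc) (not_le.2 hz)
  by_cases hpq : p = q
  swap
  · exact ⟨p, q, hpγ, hqγ, hpq, hp0, hq0⟩
  exfalso
  -- then the first coordinate is constant on γ, contradicting γ ≃ S¹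
  have hvert : ∀ z ∈ γ, z 0 = p 0 := by
    intro z hz
    have h1 : z 0 ≤ p 0 := hpmax hz
    have h2 : q 0 ≤ z 0 := hqmin hz
    rw [← hpq] at h2
    linarith
  set K := (fun z : Plane => z 1) '' γ with hK
  have hKcomp : IsCompact K := hcomp.image conty
  have hKconn : IsConnected K := hγconn.image _ conty.continuousOn
  have hKIcc : K = Icc (sInf K) (sSup K) := eq_Icc_of_connected_compact hKconn hKcomp
  set a := sInf K with ha
  set b := sSup K with hb
  -- two distinct points of γ
  have hz12 : ((e.symm 1 : ↥γ) : Plane) ≠ ((e.symm (Circle.exp Real.pi) : ↥γ) : Plane) := by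
    intro h
    exact expPiNe (e.symm.injective (Subtype.coe_injective h)).symm
  set z1 : Plane := ((e.symm 1 : ↥γ) : Plane) with hz1d
  set z2 : Plane := ((e.symm (Circle.exp Real.pi) : ↥γ) : Plane) with hz2d
  have hz1γ : z1 ∈ γ := (e.symm 1).2
  have hz2γ : z2 ∈ γ := (e.symm (Circle.exp Real.pi)).2
  have hy12 : z1 1 ≠ z2 1 := by
    intro h
    exact hz12 (coord_ext _ _ ((hvert z1 hz1γ).trans (hvert z2 hz2γ).symm) h)
  have m1 : z1 1 ∈ Icc a b := hKIcc ▸ ⟨z1, hz1γ, rfl⟩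
  have m2 : z2 1 ∈ Icc a b := hKIcc ▸ ⟨z2, hz2γ, rfl⟩
  have hab : a < b := by
    rcases lt_or_ge a b with h|h
    · exact h
    · exact absurd (by linarith [m1.1, m1.2, m2.1, m2.2] : z1 1 = z2 1) hy12
  set m := (a+b)/2 with hm
  have hmK : m ∈ K := by
    rw [hKIcc]
    exact ⟨by simp only [hm]; linarith, by simp only [hm]; linarith⟩
  obtain ⟨z0, hz0γ, hz0⟩ := hmK
  have hpunct : IsConnected (γ \ {z0}) := punctured_connected e hz0γ
  set L := (fun z : Plane => z 1) '' (γ \ {z0}) with hL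
  have hLconn : IsConnected L := hpunct.image _ conty.continuousOn
  have haL : a ∈ L := by
    have : a ∈ K := by rw [hKIcc]; exact ⟨le_refl a, le_of_lt hab⟩
    obtain ⟨w, hwγ, hw1⟩ := this
    refine ⟨w, ⟨hwγ, ?_⟩, hw1⟩
    simp only [mem_singleton_iff]
    intro h
    rw [h, hz0] at hw1
    simp only [hm] at hw1
    linarith
  have hbL : b ∈ L := by
    have : b ∈ K := by rw [hKIcc]; exact ⟨le_of_lt hab, le_refl b⟩
    obtain ⟨w, hwγ, hw1⟩ := this
    refine ⟨w, ⟨hwγ, ?_⟩, hw1⟩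
    simp only [mem_singleton_iff]
    intro h
    rw [h, hz0] at hw1
    simp only [hm] at hw1
    linarith
  have hmL : m ∈ L :=
    hLconn.isPreconnected.ordConnected.out haL hbL ⟨by simp only [hm]; linarith, by simp only [hm]; linarith⟩
  obtain ⟨w, hw, hw1⟩ := hmL
  apply hw.2
  exact coord_ext _ _ ((hvert w hw.1).trans (hvert z0 hz0γ).symm) (hw1.trans hz0.symm)
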